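/- Let 2 ≤ q ≤ 3 and let x > 0 be a real number. Then the function ε ↦ ε + (1-ε)·exp_q((1-ε)^{-1} x) is decreasing on the interval (0, 1). -/

import Mathlib

open Real Set

/-- For `2 ≤ q ≤ 3` and `x > 0`, the function
`ε ↦ ε + (1-ε)·exp_q((1-ε)⁻¹ x)` is decreasing on `(0, 1)`, where
`exp_q(y) = ((q-1)y + 1)^{1/(q-1)}`. -/
theorem antitoneOn_add_smul_qExp (q : ℝ) (hq1 : 2 ≤ q) (hq2 : q ≤ 3)
    (x : ℝ) (hx : 0 < x) :
    AntitoneOn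
      (fun ε : ℝ => ε + (1 - ε) * ((q - 1) * ((1 - ε)⁻¹ * x) + 1) ^ (1 / (q - 1)))
      (Set.Ioo 0 1) := by
  set α : ℝ := 1 / (q - 1) with hα
  have hq0 : (0:ℝ) < q - 1 := by linarith
  have hα0 : 0 < α := by positivity
  have hα1 : α ≤ 1 := by rw [hα, div_le_one hq0]; linarith
  have key : ∀ ε ∈ Ioo (0:ℝ) 1,
      HasDerivAt (fun ε : ℝ => ε + (1 - ε) * ((q - 1) * ((1 - ε)⁻¹ * x) + 1) ^ α)
        (1 - (1 - α) * ((q - 1) * ((1 - ε)⁻¹ * x) + 1) ^ α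
           - α * ((q - 1) * ((1 - ε)⁻¹ * x) + 1) ^ (α - 1)) ε := by
    intro ε hε
    have ht : (0:ℝ) < 1 - ε := by linarith [hε.2]
    have htne : (1 - ε) ≠ 0 := ne_of_gt ht
    have hw0 : (0:ℝ) < (q - 1) * ((1 - ε)⁻¹ * x) + 1 := by positivity
    have hwne : (q - 1) * ((1 - ε)⁻¹ * x) + 1 ≠ 0 := ne_of_gt hw0
    have h1 : HasDerivAt (fun ε : ℝ => 1 - ε) (-1) ε := by
      simpa using (hasDerivAt_id ε).const_sub 1
    have h2 : HasDerivAt (fun ε : ℝ => (1 - ε)⁻¹) (-(-1) / (1 - ε) ^ 2) ε :=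
      h1.inv htne
    have h4 : HasDerivAt (fun ε : ℝ => (q - 1) * ((1 - ε)⁻¹ * x) + 1)
        ((q - 1) * (-(-1) / (1 - ε) ^ 2 * x)) ε :=
      ((h2.mul_const x).const_mul (q - 1)).add_const 1
    have h5 := h4.rpow_const (p := α) (Or.inl hwne)
    have h6 := h1.mul h5
    have h7 := (hasDerivAt_id ε).add h6
    convert h7 using 1
    case e'_4 => rfl
    case e'_5 => rfl
    case e'_8 => rfl
    have hsub : ((q - 1) * ((1 - ε)⁻¹ * x) + 1) ^ (α - 1)
        = ((q - 1) * ((1 - ε)⁻¹ * x) + 1) ^ α / ((q - 1) * ((1 - ε)⁻¹ * x) + 1) :=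
      Real.rpow_sub_one hwne α
    rw [hsub]
    field_simp
    ring
  have hderiv_le : ∀ ε ∈ Ioo (0:ℝ) 1,
      deriv (fun ε : ℝ => ε + (1 - ε) * ((q - 1) * ((1 - ε)⁻¹ * x) + 1) ^ α) ε ≤ 0 := by
    intro ε hε
    rw [(key ε hε).deriv]
    have ht : (0:ℝ) < 1 - ε := by linarith [hε.2]
    set w : ℝ := (q - 1) * ((1 - ε)⁻¹ * x) + 1 with hw
    have hw1 : (1:ℝ) ≤ w := by
      have : 0 < (q - 1) * ((1 - ε)⁻¹ * x) := by positivity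
      simp [hw]; linarith
    have hw0 : (0:ℝ) < w := by linarith
    have amgm := Real.geom_mean_le_arith_mean2_weighted
      (by linarith : (0:ℝ) ≤ 1 - α) (le_of_lt hα0)
      (Real.rpow_nonneg hw0.le α) (Real.rpow_nonneg hw0.le (α - 1))
      (by ring)
    have hlhs : (w ^ α) ^ (1 - α) * (w ^ (α - 1)) ^ α = 1 := by
      rw [← Real.rpow_mul hw0.le, ← Real.rpow_mul hw0.le, ← Real.rpow_add hw0,
        show α * (1 - α) + (α - 1) * α = 0 by ring, Real.rpow_zero]
    rw [hlhs] at amgm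
    linarith
  have hdiff : ∀ ε ∈ Ioo (0:ℝ) 1,
      DifferentiableAt ℝ
        (fun ε : ℝ => ε + (1 - ε) * ((q - 1) * ((1 - ε)⁻¹ * x) + 1) ^ α) ε :=
    fun ε hε => (key ε hε).differentiableAt
  have := antitoneOn_of_deriv_nonpos (convex_Ioo (0:ℝ) 1)
    (fun ε hε => (hdiff ε hε).continuousAt.continuousWithinAt)
    (fun ε hε => (hdiff ε (by rwa [interior_Ioo] at hε)).differentiableWithinAt)
    (fun ε hε => hderiv_le ε (by rwa [interior_Ioo] at hε))
  exact this
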